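/- Let a₀ : ℝ → ℝ be C¹, bounded, with a₀' bounded and exponentially decaying (|a₀'(x)| ≤ C e^{-γ|x|}), and a₀(x) → a_∞ as x → +∞. Fix ε > 0 small, λ > 0, p = 2. Then the ODE system c₀'(t) = -ε λ a₀'(ε ρ₀(t)) c₀(t)², ρ₀'(t) = c₀(t), with c₀(0) = 1 and ρ₀(0) = -ε^{-1-δ₀} (δ₀ > 0 fixed), has a unique global solution for t ≥ 0, and c₀ satisfies the exact formula c₀(t) = exp(-λ[a₀(ε ρ₀(t)) - a₀(-ε^{-δ₀})]). -/

import Mathlib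

open Real Filter

private lemma constOnIci_aux {f : ℝ → ℝ} (hf : ∀ t ≥ (0:ℝ), HasDerivAt f 0 t)
    {t : ℝ} (ht : 0 ≤ t) : f t = f 0 := by
  have hc : ContinuousOn f (Set.Icc 0 t) := fun x hx =>
    ((hf x hx.1).continuousAt).continuousWithinAt
  exact constant_of_has_deriv_right_zero hc
    (fun x hx => ((hf x hx.1).hasDerivWithinAt)) t (Set.mem_Icc.mpr ⟨ht, le_rfl⟩)

theorem parameter_ODE_global_existence_uniqueness
    (a₀ : ℝ → ℝ) (aInf C γ ε lam δ₀ : ℝ)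
    (ha : ContDiff ℝ 1 a₀) (hbdd : ∃ M, ∀ x, |a₀ x| ≤ M)
    (hC : 0 < C) (hγ : 0 < γ)
    (hbdd' : ∀ x, |deriv a₀ x| ≤ C * Real.exp (-γ * |x|))
    (hlim : Tendsto a₀ atTop (nhds aInf))
    (hε : 0 < ε) (hlam : 0 < lam) (hδ₀ : 0 < δ₀) :
    ∃ c₀ ρ₀ : ℝ → ℝ,
      (∀ t ≥ (0:ℝ),
        HasDerivAt c₀ (-ε * lam * deriv a₀ (ε * ρ₀ t) * (c₀ t) ^ 2) t ∧
        HasDerivAt ρ₀ (c₀ t) t) ∧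
      c₀ 0 = 1 ∧ ρ₀ 0 = -ε ^ (-(1 + δ₀)) ∧
      (∀ t ≥ (0:ℝ),
        c₀ t = Real.exp (-lam * (a₀ (ε * ρ₀ t) - a₀ (-ε ^ (-δ₀))))) ∧
      (∀ c₁ ρ₁ : ℝ → ℝ,
        (∀ t ≥ (0:ℝ),
          HasDerivAt c₁ (-ε * lam * deriv a₀ (ε * ρ₁ t) * (c₁ t) ^ 2) t ∧
          HasDerivAt ρ₁ (c₁ t) t) →
        c₁ 0 = 1 → ρ₁ 0 = -ε ^ (-(1 + δ₀)) →
        ∀ t ≥ (0:ℝ), c₁ t = c₀ t ∧ ρ₁ t = ρ₀ t) := by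
  obtain ⟨M, hM⟩ := hbdd
  set x₀ : ℝ := -ε ^ (-(1 + δ₀)) with hx₀
  have hεx₀ : ε * x₀ = -ε ^ (-δ₀) := by
    rw [hx₀, mul_neg, neg_inj]
    calc ε * ε ^ (-(1 + δ₀)) = ε ^ (1:ℝ) * ε ^ (-(1 + δ₀)) := by rw [Real.rpow_one]
      _ = ε ^ ((1:ℝ) + -(1 + δ₀)) := (Real.rpow_add hε _ _).symm
      _ = ε ^ (-δ₀) := by norm_num
  set A : ℝ := a₀ (-ε ^ (-δ₀)) with hA
  set F : ℝ → ℝ := fun x => Real.exp (-lam * (a₀ (ε * x) - A)) with hFdef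
  have hFpos : ∀ x, 0 < F x := fun x => Real.exp_pos _
  have ha₀d : ∀ x, HasDerivAt a₀ (deriv a₀ x) x := fun x =>
    (ha.differentiable one_ne_zero x).hasDerivAt
  have ha₀c : Continuous a₀ := ha.continuous
  -- derivative of F
  have hFd : ∀ x, HasDerivAt F (-ε * lam * deriv a₀ (ε * x) * F x) x := by
    intro x
    have h1 : HasDerivAt (fun y : ℝ => ε * y) ε x := by
      simpa using (hasDerivAt_id x).const_mul ε
    have h2 : HasDerivAt (fun y => a₀ (ε * y)) (deriv a₀ (ε * x) * ε) x :=
      (ha₀d (ε * x)).comp x h1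
    have h3 : HasDerivAt (fun y => -lam * (a₀ (ε * y) - A))
        (-lam * (deriv a₀ (ε * x) * ε)) x := (h2.sub_const A).const_mul (-lam)
    have h4 := h3.exp
    convert h4 using 1
    simp only [hFdef]
    ring
  have hFcont : Continuous F := by
    continuity
  set G : ℝ → ℝ := fun x => (F x)⁻¹ with hGdef
  have hGpos : ∀ x, 0 < G x := fun x => inv_pos.mpr (hFpos x)
  have hGcont : Continuous G := hFcont.inv₀ fun x => (hFpos x).ne'
  -- lower bound for G
  set m : ℝ := Real.exp (-(lam * (2 * M))) with hm
  have hmpos : 0 < m := Real.exp_pos _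
  have hGlb : ∀ x, m ≤ G x := by
    intro x
    have : G x = Real.exp (lam * (a₀ (ε * x) - A)) := by
      rw [hGdef]
      simp only [hFdef]
      rw [← Real.exp_neg]
      ring_nf
    rw [this, hm]
    apply Real.exp_le_exp.mpr
    have h1 : |a₀ (ε * x) - A| ≤ 2 * M := by
      have := hM (ε * x); have := hM (-ε ^ (-δ₀))
      rw [hA]
      calc |a₀ (ε * x) - a₀ (-ε ^ (-δ₀))| ≤ |a₀ (ε * x)| + |a₀ (-ε ^ (-δ₀))| :=
        abs_sub _ _
        _ ≤ 2 * M := by linarith [hM (ε * x), hM (-ε ^ (-δ₀))]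
    nlinarith [abs_le.mp h1]
  -- H and its derivative
  set H : ℝ → ℝ := fun x => ∫ s in x₀..x, G s with hHdef
  have hHd : ∀ x, HasDerivAt H (G x) x := by
    intro x
    exact intervalIntegral.integral_hasDerivAt_right
      (hGcont.intervalIntegrable x₀ x)
      (hGcont.stronglyMeasurableAtFilter _ _)
      hGcont.continuousAt
  have hHmono : StrictMono H := by
    apply strictMono_of_deriv_pos
    intro x
    rw [(hHd x).deriv]
    exact hGpos x
  -- growth bounds: K := H - m * id is monotone
  have hKmono : Monotone fun x => H x - m * x := by
    apply monotone_of_deriv_nonneg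
    · intro x
      exact ((hHd x).sub ((hasDerivAt_id x).const_mul m)).differentiableAt
    · intro x
      have hd : HasDerivAt (fun x => H x - m * x) (G x - m) x := by
        have := (hHd x).sub ((hasDerivAt_id x).const_mul m)
        exact (by simpa using this : HasDerivAt (H - fun y => m * y) (G x - m) x)
      rw [hd.deriv]
      linarith [hGlb x]
  have hHcont : Continuous H := continuous_iff_continuousAt.mpr fun x => (hHd x).continuousAt
  have hHx₀ : H x₀ = 0 := intervalIntegral.integral_same
  have hlin : Tendsto (fun x : ℝ => m * (x - x₀) + H x₀) atTop atTop := by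
    apply tendsto_atTop_add_const_right
    apply Tendsto.const_mul_atTop hmpos
    simpa [sub_eq_add_neg] using tendsto_atTop_add_const_right atTop (-x₀) tendsto_id
  have hlinb : Tendsto (fun x : ℝ => m * (x - x₀) + H x₀) atBot atBot := by
    apply tendsto_atBot_add_const_right
    apply Tendsto.const_mul_atBot hmpos
    simpa [sub_eq_add_neg] using tendsto_atBot_add_const_right atBot (-x₀) tendsto_id
  have hHsurj : Function.Surjective H := by
    apply hHcont.surjective
    · apply tendsto_atTop_mono' _ _ hlin
      filter_upwards [eventually_ge_atTop x₀] with x hx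
      have := hKmono hx
      simp only at this
      linarith
    · apply tendsto_atBot_mono' _ _ hlinb
      filter_upwards [eventually_le_atBot x₀] with x hx
      have := hKmono hx
      simp only at this
      linarith
  -- inverse of H
  set e : ℝ ≃o ℝ := StrictMono.orderIsoOfSurjective H hHmono hHsurj with hedef
  have hecoe : ∀ x, e x = H x := fun x => rfl
  set ρ : ℝ → ℝ := fun t => e.symm t with hρdef
  have hHρ : ∀ t, H (ρ t) = t := fun t => e.apply_symm_apply t
  have hρH : ∀ x, ρ (H x) = x := fun x => e.symm_apply_apply x
  have hρcont : Continuous ρ := (OrderIso.continuous e.symm)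
  have hρd : ∀ t, HasDerivAt ρ (F (ρ t)) t := by
    intro t
    have h := HasDerivAt.of_local_left_inverse (hρcont.continuousAt)
      (hHd (ρ t)) (ne_of_gt (hGpos (ρ t))) (Eventually.of_forall hHρ)
    simpa [hGdef] using h
  set c : ℝ → ℝ := fun t => F (ρ t) with hcdef
  have hcd : ∀ t, HasDerivAt c (-ε * lam * deriv a₀ (ε * ρ t) * (c t) ^ 2) t := by
    intro t
    have h := (hFd (ρ t)).comp t (hρd t)
    refine h.congr_deriv ?_
    simp only [hcdef]
    ring
  have hρ0 : ρ 0 = x₀ := by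
    have : H x₀ = 0 := hHx₀
    calc ρ 0 = ρ (H x₀) := by rw [hHx₀]
      _ = x₀ := hρH x₀
  have hc0 : c 0 = 1 := by
    simp only [hcdef, hρ0, hFdef, hεx₀, ← hA]
    simp
  refine ⟨c, ρ, fun t _ => ⟨hcd t, hρd t⟩, hc0, hρ0, fun t _ => rfl, ?_⟩
  -- uniqueness
  intro c₁ ρ₁ hode hc₁0 hρ₁0 t ht
  have hρ₁d : ∀ s ≥ (0:ℝ), HasDerivAt ρ₁ (c₁ s) s := fun s hs => (hode s hs).2
  have hc₁d : ∀ s ≥ (0:ℝ),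
      HasDerivAt c₁ (-ε * lam * deriv a₀ (ε * ρ₁ s) * (c₁ s) ^ 2) s :=
    fun s hs => (hode s hs).1
  -- conserved quantity: c₁ * exp(lam*(a₀(ε ρ₁) - A)) is constant
  set g : ℝ → ℝ := fun s => c₁ s * Real.exp (lam * (a₀ (ε * ρ₁ s) - A)) with hgdef
  have hgd : ∀ s ≥ (0:ℝ), HasDerivAt g 0 s := by
    intro s hs
    have h1 : HasDerivAt (fun y => ε * ρ₁ y) (ε * c₁ s) s := (hρ₁d s hs).const_mul ε
    have h2 : HasDerivAt (fun y => a₀ (ε * ρ₁ y)) (deriv a₀ (ε * ρ₁ s) * (ε * c₁ s)) s :=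
      (ha₀d (ε * ρ₁ s)).comp s h1
    have h3 : HasDerivAt (fun y => lam * (a₀ (ε * ρ₁ y) - A))
        (lam * (deriv a₀ (ε * ρ₁ s) * (ε * c₁ s))) s := (h2.sub_const A).const_mul lam
    have h4 := h3.exp
    have h5 := (hc₁d s hs).mul h4
    refine h5.congr_deriv ?_
    ring
  have hgconst : ∀ s ≥ (0:ℝ), g s = 1 := by
    intro s hs
    have := constOnIci_aux hgd hs
    rw [this, hgdef]
    simp only [hc₁0, hρ₁0, ← hx₀, hεx₀, ← hA]
    simp
  have hc₁F : ∀ s ≥ (0:ℝ), c₁ s = F (ρ₁ s) := by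
    intro s hs
    have h := hgconst s hs
    simp only [hgdef] at h
    have hFval : F (ρ₁ s) = (Real.exp (lam * (a₀ (ε * ρ₁ s) - A)))⁻¹ := by
      simp only [hFdef, ← Real.exp_neg]
      ring_nf
    rw [hFval]
    field_simp
    linarith [h]
  -- ρ₁ equals ρ : H ∘ ρ₁ - id is constant
  have hφd : ∀ s ≥ (0:ℝ), HasDerivAt (fun y => H (ρ₁ y) - y) 0 s := by
    intro s hs
    have h1 : HasDerivAt (fun y => H (ρ₁ y)) (G (ρ₁ s) * c₁ s) s :=
      (hHd (ρ₁ s)).comp s (hρ₁d s hs)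
    have h2 := h1.sub (hasDerivAt_id s)
    refine h2.congr_deriv ?_
    rw [hc₁F s hs]
    simp only [hGdef]
    rw [inv_mul_cancel₀ (hFpos (ρ₁ s)).ne']
    ring
  have hφ : H (ρ₁ t) - t = H (ρ₁ 0) - 0 := constOnIci_aux hφd ht
  have hHρ₁t : H (ρ₁ t) = t := by
    rw [hρ₁0, hHx₀] at hφ
    linarith
  have hρeq : ρ₁ t = ρ t := by
    calc ρ₁ t = ρ (H (ρ₁ t)) := (hρH (ρ₁ t)).symm
      _ = ρ t := by rw [hHρ₁t]
  exact ⟨by rw [hc₁F t ht, hρeq], hρeq⟩
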